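/- Let X be a real Banach space satisfying condition (B) that admits a generating strongly dispersed sequence {x_α}_{α<ω₁} (i.e. [x_α : α<ω₁] = X). Then X has the Separable Complementation Property, and the complemented separable subspaces can be chosen of the form [x_α : α ∈ Γ] for suitable index sets Γ. If X additionally satisfies condition (1-B), then X has the 1-Separable Complementation Property. -/

import Mathlib

open Cardinal Ordinal Set Pointwise

universe u

noncomputable def closedSpan {X : Type u} [SeminormedAddCommGroup X] [NormedSpace ℝ X]
    (s : Set X) : Submodule ℝ X :=
  (Submodule.span ℝ s).topologicalClosure

def IsDispersed {X : Type u} [SeminormedAddCommGroup X] [NormedSpace ℝ X]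
    (x : Ordinal.{u} → X) (lam : Ordinal.{u}) : Prop :=
  ∀ β < lam,
    (⋂ γ ∈ Set.Iio lam, (closedSpan (x '' {α | γ < α ∧ α < lam}) : Set X)) ⊂
      (closedSpan (x '' {α | β < α ∧ α < lam}) : Set X)

def IsStronglyDispersed {X : Type u} [SeminormedAddCommGroup X] [NormedSpace ℝ X]
    (x : Ordinal.{u} → X) (lam : Ordinal.{u}) : Prop :=
  IsDispersed x lam ∧
    (⋂ β ∈ Set.Iio lam, (closedSpan (x '' {α | β < α ∧ α < lam}) : Set X)) = {0}

/-- condition (B) -/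
def CondB (X : Type u) [SeminormedAddCommGroup X] [NormedSpace ℝ X] : Prop :=
  ∀ κ : Cardinal.{u}, κ.IsRegular → ℵ₀ < κ →
    ∀ Z : Ordinal.{u} → Submodule ℝ X,
      (∀ α < κ.ord, IsClosed ((Z α : Set X))) →
      (∀ α β, α ≤ β → β < κ.ord → Z β ≤ Z α) →
      (⋂ α ∈ Set.Iio κ.ord, (Z α : Set X)) = {0} →
      Bornology.IsBounded
        (⋂ α ∈ Set.Iio κ.ord, closure (Metric.closedBall (0:X) 1 + (Z α : Set X)))

/-- condition (1-B) -/
def Cond1B (X : Type u) [SeminormedAddCommGroup X] [NormedSpace ℝ X] : Prop :=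
  ∀ κ : Cardinal.{u}, κ.IsRegular → ℵ₀ < κ →
    ∀ Z : Ordinal.{u} → Submodule ℝ X,
      (∀ α < κ.ord, IsClosed ((Z α : Set X))) →
      (∀ α β, α ≤ β → β < κ.ord → Z β ≤ Z α) →
      (⋂ α ∈ Set.Iio κ.ord, (Z α : Set X)) = {0} →
      (⋂ α ∈ Set.Iio κ.ord, closure (Metric.closedBall (0:X) 1 + (Z α : Set X))) ⊆
        Metric.closedBall (0:X) 1
namespace Stmt10Aux

open Metric TopologicalSpace

variable {X : Type u} [NormedAddCommGroup X] [NormedSpace ℝ X]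

lemma isClosed_closedSpan (s : Set X) : IsClosed ((closedSpan s : Submodule ℝ X) : Set X) :=
  Submodule.isClosed_topologicalClosure _

lemma closedSpan_coe (s : Set X) :
    ((closedSpan s : Submodule ℝ X) : Set X) = closure (Submodule.span ℝ s : Set X) :=
  Submodule.topologicalClosure_coe _

lemma subset_closedSpan (s : Set X) : s ⊆ ((closedSpan s : Submodule ℝ X) : Set X) :=
  fun a ha => (Submodule.le_topologicalClosure _) (Submodule.subset_span ha)

lemma closedSpan_mono {s t : Set X} (h : s ⊆ t) :
    (closedSpan s : Submodule ℝ X) ≤ closedSpan t :=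
  Submodule.topologicalClosure_mono (Submodule.span_mono h)

lemma lam_limit : Order.IsSuccLimit ((Cardinal.aleph 1).ord) := by
  rw [Cardinal.ord_aleph]; exact Cardinal.isSuccLimit_omega 1

lemma lt_add_one_ord (b : Ordinal.{u}) : b < b + 1 := by
  rw [Ordinal.add_one_eq_succ]; exact Order.lt_succ b

lemma succ_lt_lam {β : Ordinal.{u}} (h : β < (Cardinal.aleph 1).ord) :
    β + 1 < (Cardinal.aleph 1).ord := by
  rw [Ordinal.add_one_eq_succ]; exact lam_limit.succ_lt h

lemma nat_iSup_lt_lam (g : ℕ → Ordinal.{u}) (h : ∀ n, g n < (Cardinal.aleph 1).ord) :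
    (⨆ n, g n) < (Cardinal.aleph 1).ord := by
  apply Ordinal.iSup_lt_ord_lift ?_ h
  rw [Cardinal.mk_nat, Cardinal.lift_aleph0, Cardinal.IsRegular.cof_eq Cardinal.isRegular_aleph_one]
  exact Cardinal.aleph0_lt_aleph_one

lemma countable_Iio_of_lt {β : Ordinal.{u}} (hβ : β < (Cardinal.aleph 1).ord) :
    (Set.Iio β).Countable := by
  have h1 : β.card < Cardinal.aleph 1 := Cardinal.lt_ord.1 hβ
  have h2 : β.card ≤ ℵ₀ := by
    have he : (Cardinal.aleph 1) = Order.succ ℵ₀ := by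
      rw [← Cardinal.aleph_zero, ← Cardinal.aleph_succ, Ordinal.succ_zero]
    rw [he, Order.lt_succ_iff] at h1
    exact h1
  rw [Cardinal.countable_iff_lt_aleph_one _, Ordinal.mk_Iio_ordinal]
  calc Cardinal.lift.{u+1} β.card ≤ Cardinal.lift.{u+1} ℵ₀ := Cardinal.lift_le.2 h2
    _ = ℵ₀ := Cardinal.lift_aleph0
    _ < Cardinal.aleph 1 := Cardinal.aleph0_lt_aleph_one

lemma isSeparable_span_of_countable {s : Set X} (hs : s.Countable) :
    TopologicalSpace.IsSeparable ((Submodule.span ℝ s : Submodule ℝ X) : Set X) := by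
  obtain ⟨e, he⟩ : ∃ e : ℕ → X, s ⊆ Set.range e := by
    rcases s.eq_empty_or_nonempty with h | h
    · exact ⟨fun _ => 0, by simp [h]⟩
    · obtain ⟨f, hf⟩ := hs.exists_eq_range h
      exact ⟨f, hf.subset⟩
  have key : ∀ n : ℕ, TopologicalSpace.IsSeparable
      (Set.range (fun c : Fin n → ℝ => ∑ i, c i • e i)) := by
    intro n
    apply TopologicalSpace.isSeparable_range
    exact continuous_finset_sum _ fun i _ => (continuous_apply i).smul continuous_const
  apply TopologicalSpace.IsSeparable.mono
    (TopologicalSpace.isSeparable_iUnion.2 key)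
  intro u hu
  have hu' : u ∈ Submodule.span ℝ (Set.range e) :=
    Submodule.span_mono he (SetLike.mem_coe.1 hu)
  obtain ⟨T, hTsub, hT⟩ := Submodule.mem_span_finite_of_mem_span hu'
  classical
  have hel : ∀ y ∈ T, ∃ i : ℕ, e i = y := fun y hy => hTsub hy
  choose idx hidx using hel
  set N : ℕ := T.attach.sup (fun y => idx y.1 y.2) + 1 with hN
  have hTN : (T : Set X) ⊆ e '' {i | i < N} := by
    intro y hy
    refine ⟨idx y hy, ?_, hidx y hy⟩
    have : idx y hy ≤ T.attach.sup (fun z => idx z.1 z.2) :=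
      Finset.le_sup (f := fun z : {w // w ∈ T} => idx z.1 z.2) (Finset.mem_attach T ⟨y, hy⟩)
    rw [hN]
    exact Nat.lt_succ_of_le this
  have h3 : u ∈ Submodule.span ℝ (e '' {i | i < N}) := Submodule.span_mono hTN hT
  have himg : e '' {i | i < N} = Set.range (fun i : Fin N => e i) := by
    ext y
    constructor
    · rintro ⟨i, hi, rfl⟩; exact ⟨⟨i, hi⟩, rfl⟩
    · rintro ⟨i, rfl⟩; exact ⟨i, i.2, rfl⟩
  rw [himg, Submodule.mem_span_range_iff_exists_fun] at h3
  obtain ⟨c, hc⟩ := h3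
  exact Set.mem_iUnion.2 ⟨N, ⟨c, hc⟩⟩

lemma isSeparable_closedSpan_of_countable {s : Set X} (hs : s.Countable) :
    TopologicalSpace.IsSeparable ((closedSpan s : Submodule ℝ X) : Set X) := by
  rw [closedSpan_coe]
  exact (isSeparable_span_of_countable hs).closure

end Stmt10Aux
namespace Stmt10Aux

open Metric TopologicalSpace

variable {X : Type u} [NormedAddCommGroup X] [NormedSpace ℝ X]

/-- The closed span of the tail `{x_α : β ≤ α < ω₁}`. -/
noncomputable def tailZ (x : Ordinal.{u} → X) (β : Ordinal.{u}) : Submodule ℝ X :=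
  closedSpan (x '' {α | β ≤ α ∧ α < (Cardinal.aleph 1).ord})

lemma tailZ_isClosed (x : Ordinal.{u} → X) (β : Ordinal.{u}) :
    IsClosed ((tailZ x β : Submodule ℝ X) : Set X) := isClosed_closedSpan _

lemma tailZ_antitone (x : Ordinal.{u} → X) {β β' : Ordinal.{u}} (h : β ≤ β') :
    tailZ x β' ≤ tailZ x β := by
  apply closedSpan_mono
  apply Set.image_mono
  rintro α ⟨h1, h2⟩
  exact ⟨h.trans h1, h2⟩

lemma tailZ_nonempty (x : Ordinal.{u} → X) (β : Ordinal.{u}) :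
    ((tailZ x β : Submodule ℝ X) : Set X).Nonempty :=
  ⟨0, SetLike.mem_coe.2 (Submodule.zero_mem _)⟩

lemma infDist_tailZ_mono (x : Ordinal.{u} → X) {β β' : Ordinal.{u}} (h : β ≤ β') (u : X) :
    Metric.infDist u ((tailZ x β : Submodule ℝ X) : Set X) ≤
      Metric.infDist u ((tailZ x β' : Submodule ℝ X) : Set X) :=
  Metric.infDist_le_infDist_of_subset (tailZ_antitone x h) (tailZ_nonempty x β')

lemma infDist_tailZ_le_norm (x : Ordinal.{u} → X) (β : Ordinal.{u}) (u : X) :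
    Metric.infDist u ((tailZ x β : Submodule ℝ X) : Set X) ≤ ‖u‖ := by
  have h := Metric.infDist_le_dist_of_mem (x := u)
    (SetLike.mem_coe.2 (Submodule.zero_mem (tailZ x β)) : (0:X) ∈ ((tailZ x β : Submodule ℝ X) : Set X))
  simpa [dist_zero_right] using h

lemma tailZ_iInter (x : Ordinal.{u} → X)
    (hsd : IsStronglyDispersed x (Cardinal.aleph 1).ord) :
    (⋂ β ∈ Set.Iio (Cardinal.aleph 1).ord, ((tailZ x β : Submodule ℝ X) : Set X)) = {0} := by
  apply subset_antisymm
  · intro u hu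
    rw [← hsd.2]
    apply Set.mem_iInter₂.2
    intro β hβ
    have h1 : u ∈ ((tailZ x (β+1) : Submodule ℝ X) : Set X) :=
      Set.mem_iInter₂.1 hu (β+1) (succ_lt_lam hβ)
    have h2 : tailZ x (β+1) ≤ closedSpan (x '' {α | β < α ∧ α < (Cardinal.aleph 1).ord}) := by
      apply closedSpan_mono
      apply Set.image_mono
      rintro α ⟨ha, hb⟩
      refine ⟨?_, hb⟩
      rw [Ordinal.add_one_eq_succ, Order.succ_le_iff] at ha
      exact ha
    exact h2 h1
  · intro u hu
    rw [Set.mem_singleton_iff] at hu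
    subst hu
    exact Set.mem_iInter₂.2 fun β _ => SetLike.mem_coe.2 (Submodule.zero_mem _)

lemma exists_stab (x : Ordinal.{u} → X) (u : X) :
    ∃ θ, θ < (Cardinal.aleph 1).ord ∧ ∀ γ, γ < (Cardinal.aleph 1).ord →
      Metric.infDist u ((tailZ x γ : Submodule ℝ X) : Set X) ≤
        Metric.infDist u ((tailZ x θ : Submodule ℝ X) : Set X) := by
  set A : Set ℝ :=
    (fun γ => Metric.infDist u ((tailZ x γ : Submodule ℝ X) : Set X)) '' Set.Iio (Cardinal.aleph 1).ord
    with hA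
  have hAne : A.Nonempty := ⟨_, ⟨0, lam_limit.pos, rfl⟩⟩
  have hAbdd : BddAbove A := by
    refine ⟨‖u‖, ?_⟩
    rintro r ⟨γ, hγ, rfl⟩
    exact infDist_tailZ_le_norm x γ u
  set s := sSup A with hs
  have H : ∀ n : ℕ, ∃ γ, γ < (Cardinal.aleph 1).ord ∧
      s - 1/(n+1) < Metric.infDist u ((tailZ x γ : Submodule ℝ X) : Set X) := by
    intro n
    have h1 : s - 1/(n+1) < s := by
      have : (0:ℝ) < 1/(n+1) := by positivity
      linarith
    obtain ⟨r, hr, hlt⟩ := exists_lt_of_lt_csSup hAne h1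
    obtain ⟨γ, hγ, rfl⟩ := hr
    exact ⟨γ, hγ, hlt⟩
  choose γf hγlt hγd using H
  refine ⟨⨆ n, γf n, nat_iSup_lt_lam _ hγlt, ?_⟩
  intro γ' hγ'
  have h1 : Metric.infDist u ((tailZ x γ' : Submodule ℝ X) : Set X) ≤ s :=
    le_csSup hAbdd ⟨γ', hγ', rfl⟩
  have h2 : s ≤ Metric.infDist u ((tailZ x (⨆ n, γf n) : Submodule ℝ X) : Set X) := by
    by_contra hc
    push_neg at hc
    obtain ⟨n, hn⟩ := exists_nat_one_div_lt (sub_pos.2 hc)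
    have h3 := hγd n
    have h4 := infDist_tailZ_mono x (Ordinal.le_iSup γf n) u
    linarith
  linarith

end Stmt10Aux
namespace Stmt10Aux

open Metric TopologicalSpace

variable {X : Type u} [NormedAddCommGroup X] [NormedSpace ℝ X]

lemma key_bound (x : Ordinal.{u} → X)
    (hsd : IsStronglyDispersed x (Cardinal.aleph 1).ord) (M : ℝ)
    (hM : (⋂ β ∈ Set.Iio (Cardinal.aleph 1).ord,
        closure (Metric.closedBall (0:X) 1 + ((tailZ x β : Submodule ℝ X) : Set X))) ⊆
      Metric.closedBall (0:X) M)
    (u : X) (βs : Ordinal.{u}) (hβs : βs < (Cardinal.aleph 1).ord)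
    (hstab : ∀ γ, γ < (Cardinal.aleph 1).ord →
      Metric.infDist u ((tailZ x γ : Submodule ℝ X) : Set X) ≤
        Metric.infDist u ((tailZ x βs : Submodule ℝ X) : Set X)) :
    ‖u‖ ≤ M * Metric.infDist u ((tailZ x βs : Submodule ℝ X) : Set X) := by
  set c := Metric.infDist u ((tailZ x βs : Submodule ℝ X) : Set X) with hc
  rcases eq_or_lt_of_le (Metric.infDist_nonneg : (0:ℝ) ≤ c) with h0 | hpos
  · -- c = 0 forces u = 0
    have hu0 : u = 0 := by
      have hmem : ∀ γ, γ < (Cardinal.aleph 1).ord → u ∈ ((tailZ x γ : Submodule ℝ X) : Set X) := by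
        intro γ hγ
        have h1 : Metric.infDist u ((tailZ x γ : Submodule ℝ X) : Set X) = 0 :=
          le_antisymm ((hstab γ hγ).trans (hc.trans h0.symm).le) Metric.infDist_nonneg
        exact ((tailZ_isClosed x γ).mem_iff_infDist_zero (tailZ_nonempty x γ)).2 h1
      have hu : u ∈ (⋂ β ∈ Set.Iio (Cardinal.aleph 1).ord, ((tailZ x β : Submodule ℝ X) : Set X)) :=
        Set.mem_iInter₂.2 fun γ hγ => hmem γ hγ
      rw [tailZ_iInter x hsd] at hu
      exact hu
    have hc0 : c = 0 := hc.trans h0.symm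
    rw [hu0, norm_zero, hc0, mul_zero]
  · -- c > 0
    have hw : ∀ γ, γ < (Cardinal.aleph 1).ord →
        c⁻¹ • u ∈ closure (Metric.closedBall (0:X) 1 + ((tailZ x γ : Submodule ℝ X) : Set X)) := by
      intro γ hγ
      rw [Metric.mem_closure_iff]
      intro ε hε
      have h1 : Metric.infDist u ((tailZ x γ : Submodule ℝ X) : Set X) < c * (1 + ε/2) :=
        lt_of_le_of_lt (hstab γ hγ) (by nlinarith)
      obtain ⟨z, hz, hdz⟩ := (Metric.infDist_lt_iff (tailZ_nonempty x γ)).1 h1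
      set v := c⁻¹ • u - c⁻¹ • z with hv
      have hvnorm : ‖v‖ < 1 + ε/2 := by
        have h2 : v = c⁻¹ • (u - z) := by rw [hv, smul_sub]
        have h3 : ‖v‖ = c⁻¹ * ‖u - z‖ := by
          rw [h2, norm_smul, Real.norm_eq_abs, abs_of_pos (inv_pos.2 hpos)]
        rw [dist_eq_norm] at hdz
        have h4 := mul_lt_mul_of_pos_left hdz (inv_pos.2 hpos)
        rw [← mul_assoc, inv_mul_cancel₀ (ne_of_gt hpos), one_mul] at h4
        rw [h3]
        exact h4
      set z' := c⁻¹ • z with hz'def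
      have hz'mem : z' ∈ ((tailZ x γ : Submodule ℝ X) : Set X) :=
        SetLike.mem_coe.2 (Submodule.smul_mem _ _ (SetLike.mem_coe.1 hz))
      rcases le_or_gt ‖v‖ 1 with hr | hr
      · refine ⟨c⁻¹ • u, ?_, by simpa [dist_self] using hε⟩
        have heq : c⁻¹ • u = v + z' := by rw [hv, hz'def]; abel
        rw [heq]
        exact Set.add_mem_add (mem_closedBall_zero_iff.2 hr) hz'mem
      · have hvne : ‖v‖ ≠ 0 := ne_of_gt (lt_trans zero_lt_one hr)
        refine ⟨‖v‖⁻¹ • v + z', Set.add_mem_add ?_ hz'mem, ?_⟩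
        · apply mem_closedBall_zero_iff.2
          rw [norm_smul, Real.norm_eq_abs, abs_of_nonneg (inv_nonneg.2 (norm_nonneg v)),
            inv_mul_cancel₀ hvne]
        · have heq : c⁻¹ • u - (‖v‖⁻¹ • v + z') = v - ‖v‖⁻¹ • v := by
            rw [hv, hz'def]; abel
          rw [dist_eq_norm, heq]
          have h5 : v - ‖v‖⁻¹ • v = (1 - ‖v‖⁻¹) • v := by rw [sub_smul, one_smul]
          have h6 : (0:ℝ) ≤ 1 - ‖v‖⁻¹ := by
            have : ‖v‖⁻¹ ≤ 1 := by
              rw [inv_le_one_iff₀]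
              right; exact hr.le
            linarith
          rw [h5, norm_smul, Real.norm_eq_abs, abs_of_nonneg h6, sub_mul, one_mul,
            inv_mul_cancel₀ hvne]
          linarith
    have hwK : c⁻¹ • u ∈ Metric.closedBall (0:X) M :=
      hM (Set.mem_iInter₂.2 fun γ hγ => hw γ hγ)
    rw [mem_closedBall_zero_iff, norm_smul, Real.norm_eq_abs, abs_of_pos (inv_pos.2 hpos)] at hwK
    calc ‖u‖ = c * (c⁻¹ * ‖u‖) := by
          rw [← mul_assoc, mul_inv_cancel₀ (ne_of_gt hpos), one_mul]
      _ ≤ c * M := mul_le_mul_of_nonneg_left hwK hpos.le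
      _ = M * c := mul_comm _ _

lemma exists_step (x : Ordinal.{u} → X) {b : Ordinal.{u}} (hb : b < (Cardinal.aleph 1).ord) :
    ∃ b', b < b' ∧ b' < (Cardinal.aleph 1).ord ∧ ∃ cset : Set X,
      ((closedSpan (x '' Set.Iio b) : Submodule ℝ X) : Set X) ⊆ closure cset ∧
      ∀ u ∈ cset, ∀ γ, γ < (Cardinal.aleph 1).ord →
        Metric.infDist u ((tailZ x γ : Submodule ℝ X) : Set X) ≤
          Metric.infDist u ((tailZ x b' : Submodule ℝ X) : Set X) := by
  obtain ⟨cset, hcc, hcsub⟩ :=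
    isSeparable_closedSpan_of_countable (X := X) ((countable_Iio_of_lt hb).image x)
  rcases cset.eq_empty_or_nonempty with h | h
  · exact ⟨b+1, lt_add_one_ord b, succ_lt_lam hb, cset, hcsub, by simp [h]⟩
  · obtain ⟨g, hg⟩ := hcc.exists_eq_range h
    have H : ∀ n : ℕ, ∃ θ, θ < (Cardinal.aleph 1).ord ∧ ∀ γ, γ < (Cardinal.aleph 1).ord →
        Metric.infDist (g n) ((tailZ x γ : Submodule ℝ X) : Set X) ≤
          Metric.infDist (g n) ((tailZ x θ : Submodule ℝ X) : Set X) :=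
      fun n => exists_stab x (g n)
    choose θf hθlt hθ using H
    refine ⟨⨆ n, max (θf n) (b+1), ?_, ?_, cset, hcsub, ?_⟩
    · calc b < b + 1 := lt_add_one_ord b
        _ ≤ max (θf 0) (b+1) := le_max_right _ _
        _ ≤ _ := Ordinal.le_iSup (fun n => max (θf n) (b+1)) 0
    · exact nat_iSup_lt_lam _ fun n => max_lt (hθlt n) (succ_lt_lam hb)
    · rintro u hu γ hγ
      rw [hg] at hu
      obtain ⟨n, rfl⟩ := hu
      exact (hθ n γ hγ).trans
        (infDist_tailZ_mono x ((le_max_left _ _).trans (Ordinal.le_iSup (fun n => max (θf n) (b+1)) n)) _)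

/-- The submodule of vectors lying in the closed span of countably many of the `x_α`. -/
noncomputable def ctblSpanSet (x : Ordinal.{u} → X) : Submodule ℝ X where
  carrier := {y | ∃ Γ : Set Ordinal.{u}, Γ.Countable ∧ Γ ⊆ Set.Iio ((Cardinal.aleph 1).ord) ∧
    y ∈ closedSpan (x '' Γ)}
  zero_mem' := ⟨∅, Set.countable_empty, Set.empty_subset _, Submodule.zero_mem _⟩
  add_mem' := by
    rintro a b ⟨Γ₁, h1c, h1s, h1m⟩ ⟨Γ₂, h2c, h2s, h2m⟩
    exact ⟨Γ₁ ∪ Γ₂, h1c.union h2c, Set.union_subset h1s h2s,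
      Submodule.add_mem _ ((closedSpan_mono (Set.image_mono Set.subset_union_left)) h1m)
        ((closedSpan_mono (Set.image_mono Set.subset_union_right)) h2m)⟩
  smul_mem' := by
    rintro c a ⟨Γ, hc, hs, hm⟩
    exact ⟨Γ, hc, hs, Submodule.smul_mem _ c hm⟩

lemma ctblSpanSet_isClosed (x : Ordinal.{u} → X) :
    IsClosed ((ctblSpanSet x : Submodule ℝ X) : Set X) := by
  apply IsSeqClosed.isClosed
  intro f p hf hfp
  choose Γf hc hs hm using hf
  refine ⟨⋃ n, Γf n, Set.countable_iUnion hc, Set.iUnion_subset hs, ?_⟩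
  have hcl : IsClosed ((closedSpan (x '' ⋃ n, Γf n) : Submodule ℝ X) : Set X) :=
    isClosed_closedSpan _
  apply SetLike.mem_coe.1
  refine hcl.mem_of_tendsto hfp (Filter.Eventually.of_forall fun n => ?_)
  exact SetLike.mem_coe.2
    ((closedSpan_mono (Set.image_mono (Set.subset_iUnion Γf n))) (hm n))

lemma mem_countable_span (x : Ordinal.{u} → X)
    (hgen : closedSpan (x '' Set.Iio (Cardinal.aleph 1).ord) = (⊤ : Submodule ℝ X)) (y : X) :
    ∃ Γ : Set Ordinal.{u}, Γ.Countable ∧ Γ ⊆ Set.Iio (Cardinal.aleph 1).ord ∧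
      y ∈ closedSpan (x '' Γ) := by
  have hle : closedSpan (x '' Set.Iio (Cardinal.aleph 1).ord) ≤ ctblSpanSet x := by
    apply Submodule.topologicalClosure_minimal
    · rw [Submodule.span_le]
      rintro _ ⟨α, hα, rfl⟩
      exact ⟨{α}, Set.countable_singleton α, Set.singleton_subset_iff.2 hα,
        subset_closedSpan _ ⟨α, rfl, rfl⟩⟩
    · exact ctblSpanSet_isClosed x
  exact hle (by rw [hgen]; trivial)

lemma exists_beta0 (x : Ordinal.{u} → X)
    (hgen : closedSpan (x '' Set.Iio (Cardinal.aleph 1).ord) = (⊤ : Submodule ℝ X))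
    (Y : Submodule ℝ X) (hY : TopologicalSpace.IsSeparable (Y : Set X)) :
    ∃ β₀, β₀ < (Cardinal.aleph 1).ord ∧ Y ≤ closedSpan (x '' Set.Iio β₀) := by
  obtain ⟨c, hcc, hcs⟩ := hY
  choose Γf hΓc hΓs hΓm using fun y : X => mem_countable_span x hgen y
  set Γz : Set Ordinal.{u} := ⋃ y ∈ c, Γf y with hΓz
  have hΓzc : Γz.Countable := hcc.biUnion (fun y _ => hΓc y)
  have hΓzs : Γz ⊆ Set.Iio (Cardinal.aleph 1).ord := Set.iUnion₂_subset fun y _ => hΓs y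
  obtain ⟨β₀, hβ₀lt, hβ₀⟩ : ∃ β₀, β₀ < (Cardinal.aleph 1).ord ∧ Γz ⊆ Set.Iio β₀ := by
    rcases Γz.eq_empty_or_nonempty with h | h
    · exact ⟨0, lam_limit.pos, by simp [h]⟩
    · obtain ⟨g, hg⟩ := hΓzc.exists_eq_range h
      have hglt : ∀ n, g n < (Cardinal.aleph 1).ord := fun n =>
        hΓzs (hg ▸ Set.mem_range_self n)
      refine ⟨(⨆ n, g n) + 1, succ_lt_lam (nat_iSup_lt_lam g hglt), ?_⟩
      intro γ hγ
      rw [hg] at hγ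
      obtain ⟨n, rfl⟩ := hγ
      exact lt_of_le_of_lt (Ordinal.le_iSup g n) (lt_add_one_ord _)
  refine ⟨β₀, hβ₀lt, ?_⟩
  have h1 : c ⊆ ((closedSpan (x '' Set.Iio β₀) : Submodule ℝ X) : Set X) := by
    intro y hy
    have hsub : Γf y ⊆ Set.Iio β₀ := fun γ hγ => hβ₀ (Set.mem_biUnion hy hγ)
    exact SetLike.mem_coe.2 ((closedSpan_mono (Set.image_mono hsub)) (hΓm y))
  intro y hy
  exact SetLike.mem_coe.1
    ((hcs.trans ((isClosed_closedSpan _).closure_subset_iff.2 h1)) (SetLike.mem_coe.2 hy))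

end Stmt10Aux
namespace Stmt10Aux

open Metric TopologicalSpace

variable {X : Type u} [NormedAddCommGroup X] [NormedSpace ℝ X]

lemma main_construction [CompleteSpace X] (x : Ordinal.{u} → X)
    (hsd : IsStronglyDispersed x (Cardinal.aleph 1).ord)
    (hgen : closedSpan (x '' Set.Iio (Cardinal.aleph 1).ord) = (⊤ : Submodule ℝ X)) (M : ℝ)
    (hM : (⋂ β ∈ Set.Iio (Cardinal.aleph 1).ord,
        closure (Metric.closedBall (0:X) 1 + ((tailZ x β : Submodule ℝ X) : Set X))) ⊆
      Metric.closedBall (0:X) M)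
    (Y : Submodule ℝ X) (hY : TopologicalSpace.IsSeparable (Y : Set X)) :
    ∃ Γ ⊆ Set.Iio (Cardinal.aleph 1).ord, ∃ P : X →L[ℝ] X,
      (∀ v, P (P v) = P v) ∧ ‖P‖ ≤ M ∧
      LinearMap.range (P : X →ₗ[ℝ] X) = closedSpan (x '' Γ) ∧
      TopologicalSpace.IsSeparable ((closedSpan (x '' Γ) : Submodule ℝ X) : Set X) ∧
      Y ≤ closedSpan (x '' Γ) := by
  classical
  -- M is nonnegative
  have hM0 : (0:ℝ) ≤ M := by
    have h0 : (0:X) ∈ ⋂ β ∈ Set.Iio (Cardinal.aleph 1).ord,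
        closure (Metric.closedBall (0:X) 1 + ((tailZ x β : Submodule ℝ X) : Set X)) := by
      refine Set.mem_iInter₂.2 fun β hβ => subset_closure ?_
      have h1 : (0:X) ∈ Metric.closedBall (0:X) 1 := by
        simp
      have h2 : (0:X) ∈ ((tailZ x β : Submodule ℝ X) : Set X) :=
        SetLike.mem_coe.2 (Submodule.zero_mem _)
      simpa using Set.add_mem_add h1 h2
    have := hM h0
    rw [mem_closedBall_zero_iff, norm_zero] at this
    exact this
  obtain ⟨β₀, hβ₀lt, hβ₀Y⟩ := exists_beta0 x hgen Y hY
  -- closing-off iteration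
  let T := {b : Ordinal.{u} // b < (Cardinal.aleph 1).ord}
  let F : T → T := fun b => ⟨(exists_step x b.2).choose, (exists_step x b.2).choose_spec.2.1⟩
  let seq : ℕ → T := fun n => F^[n] ⟨β₀, hβ₀lt⟩
  have hseq_succ : ∀ n, seq (n+1) = F (seq n) := fun n => Function.iterate_succ_apply' F n _
  have hseq_lt : ∀ n, (seq n).1 < (seq (n+1)).1 := by
    intro n
    rw [hseq_succ]
    exact (exists_step x (seq n).2).choose_spec.1
  have hstep : ∀ n, ∃ cset : Set X,
      ((closedSpan (x '' Set.Iio (seq n).1) : Submodule ℝ X) : Set X) ⊆ closure cset ∧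
      ∀ u ∈ cset, ∀ γ, γ < (Cardinal.aleph 1).ord →
        Metric.infDist u ((tailZ x γ : Submodule ℝ X) : Set X) ≤
          Metric.infDist u ((tailZ x (seq (n+1)).1 : Submodule ℝ X) : Set X) := by
    intro n
    rw [hseq_succ]
    exact (exists_step x (seq n).2).choose_spec.2.2
  choose csets hcsub hcstab using hstep
  set βs : Ordinal.{u} := ⨆ n, (seq n).1 with hβsdef
  have hβslt : βs < (Cardinal.aleph 1).ord := nat_iSup_lt_lam _ fun n => (seq n).2
  have hβsle : ∀ n, (seq n).1 ≤ βs := fun n => Ordinal.le_iSup (fun n => (seq n).1) n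
  have hβ₀le : β₀ ≤ βs := hβsle 0
  set W : Submodule ℝ X := closedSpan (x '' Set.Iio βs) with hWdef
  set S : Submodule ℝ X := tailZ x βs with hSdef
  have hWclosed : IsClosed (W : Set X) := isClosed_closedSpan _
  have hSclosed : IsClosed (S : Set X) := tailZ_isClosed x βs
  -- the fundamental estimate on W
  have hkey : ∀ u ∈ W, ‖u‖ ≤ M * Metric.infDist u (S : Set X) := by
    have hGclosed : IsClosed {u : X | ‖u‖ ≤ M * Metric.infDist u (S : Set X)} :=
      isClosed_le continuous_norm (continuous_const.mul (Metric.continuous_infDist_pt _))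
    have hsub1 : ∀ n, csets n ⊆ {u : X | ‖u‖ ≤ M * Metric.infDist u (S : Set X)} := by
      intro n u hu
      have h1 : ∀ γ, γ < (Cardinal.aleph 1).ord →
          Metric.infDist u ((tailZ x γ : Submodule ℝ X) : Set X) ≤
            Metric.infDist u ((tailZ x βs : Submodule ℝ X) : Set X) := fun γ hγ =>
        (hcstab n u hu γ hγ).trans (infDist_tailZ_mono x (hβsle (n+1)) u)
      exact key_bound x hsd M hM u βs hβslt h1
    have hmono : Monotone fun n => (seq n).1 := monotone_nat_of_le_succ fun n => (hseq_lt n).le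
    have hsub2 : ((Submodule.span ℝ (x '' Set.Iio βs) : Submodule ℝ X) : Set X) ⊆
        closure (⋃ n, csets n) := by
      intro u hu
      obtain ⟨Tf, hTsub, hTm⟩ := Submodule.mem_span_finite_of_mem_span (SetLike.mem_coe.1 hu)
      have hel : ∀ y ∈ Tf, ∃ n : ℕ, y ∈ x '' Set.Iio (seq n).1 := by
        intro y hy
        obtain ⟨α, hα, rfl⟩ := hTsub hy
        have hlt : α < βs := hα
        rw [hβsdef, Ordinal.lt_iSup_iff] at hlt
        obtain ⟨n, hn⟩ := hlt
        exact ⟨n, α, hn, rfl⟩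
      choose nf hnf using hel
      set N : ℕ := Tf.attach.sup (fun y => nf y.1 y.2) with hNdef
      have hTN : (Tf : Set X) ⊆ x '' Set.Iio (seq N).1 := by
        intro y hy
        have h2 := hnf y hy
        have h3 : nf y hy ≤ N := by
          rw [hNdef]
          exact Finset.le_sup (f := fun z : {w // w ∈ Tf} => nf z.1 z.2) (Finset.mem_attach Tf ⟨y, hy⟩)
        exact Set.image_mono (Set.Iio_subset_Iio (hmono h3)) h2
      have h4 : u ∈ Submodule.span ℝ (x '' Set.Iio (seq N).1) := Submodule.span_mono hTN hTm
      have h5 : u ∈ ((closedSpan (x '' Set.Iio (seq N).1) : Submodule ℝ X) : Set X) :=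
        SetLike.mem_coe.2 (Submodule.le_topologicalClosure _ h4)
      exact closure_mono (Set.subset_iUnion csets N) (hcsub N h5)
    intro u hu
    have h6 : (W : Set X) ⊆ closure (⋃ n, csets n) := by
      rw [hWdef, closedSpan_coe]
      calc closure ((Submodule.span ℝ (x '' Set.Iio βs) : Submodule ℝ X) : Set X)
          ⊆ closure (closure (⋃ n, csets n)) := closure_mono hsub2
        _ = closure (⋃ n, csets n) := closure_closure
    have h7 : closure (⋃ n, csets n) ⊆ {u : X | ‖u‖ ≤ M * Metric.infDist u (S : Set X)} :=
      hGclosed.closure_subset_iff.2 (Set.iUnion_subset hsub1)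
    exact h7 (h6 (SetLike.mem_coe.2 hu))
  -- the projection estimate
  have hkey2 : ∀ u ∈ W, ∀ v ∈ S, ‖u‖ ≤ M * ‖u + v‖ := by
    intro u hu v hv
    have h1 : Metric.infDist u (S : Set X) ≤ ‖u + v‖ := by
      have h2 := Metric.infDist_le_dist_of_mem
        (SetLike.mem_coe.2 (Submodule.neg_mem S hv) : (-v) ∈ (S : Set X)) (x := u)
      rw [dist_eq_norm, sub_neg_eq_add] at h2
      exact h2
    exact (hkey u hu).trans (mul_le_mul_of_nonneg_left h1 hM0)
  -- W and S are complementary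
  have hdisj : Disjoint W S := by
    rw [Submodule.disjoint_def]
    intro u huW huS
    have h1 := hkey2 u huW (-u) (Submodule.neg_mem S huS)
    rw [add_neg_cancel, norm_zero, mul_zero] at h1
    exact norm_le_zero_iff.1 h1
  have hsum_closed : IsClosed ((W : Set X) + (S : Set X)) := by
    apply IsSeqClosed.isClosed
    intro f p hf hfp
    choose uu hu vv hv huv using fun n => Set.mem_add.1 (hf n)
    have hcauchy : CauchySeq uu := by
      rw [Metric.cauchySeq_iff]
      intro ε hε
      have hf' : CauchySeq f := hfp.cauchySeq
      rw [Metric.cauchySeq_iff] at hf'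
      obtain ⟨N, hN⟩ := hf' (ε / (M + 1)) (by positivity)
      refine ⟨N, fun m hm n hn => ?_⟩
      have h1 : ‖uu m - uu n‖ ≤ M * ‖(uu m - uu n) + (vv m - vv n)‖ :=
        hkey2 _ (Submodule.sub_mem W (hu m) (hu n)) _ (Submodule.sub_mem S (hv m) (hv n))
      have h2 : (uu m - uu n) + (vv m - vv n) = f m - f n := by
        rw [← huv m, ← huv n]; abel
      rw [h2] at h1
      have h3 := hN m hm n hn
      rw [dist_eq_norm] at h3 ⊢
      have h4 : M * (ε / (M+1)) < ε := by
        have h5 : M / (M+1) < 1 := (div_lt_one (by positivity)).2 (by linarith)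
        calc M * (ε/(M+1)) = (M/(M+1)) * ε := by ring
          _ < 1 * ε := mul_lt_mul_of_pos_right h5 hε
          _ = ε := one_mul ε
      have h6 := mul_le_mul_of_nonneg_left h3.le hM0
      linarith
    obtain ⟨q, hq⟩ := cauchySeq_tendsto_of_complete hcauchy
    have hqW : q ∈ (W : Set X) :=
      hWclosed.mem_of_tendsto hq (Filter.Eventually.of_forall fun n => hu n)
    have hvv : ∀ n, vv n = f n - uu n := by
      intro n
      rw [← huv n]; abel
    have hvtend : Filter.Tendsto vv Filter.atTop (nhds (p - q)) := by
      have h8 := hfp.sub hq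
      have h9 : vv = fun n => f n - uu n := funext hvv
      rw [h9]
      exact h8
    have hqS : p - q ∈ (S : Set X) :=
      hSclosed.mem_of_tendsto hvtend (Filter.Eventually.of_forall fun n => hv n)
    have : q + (p - q) ∈ (W : Set X) + (S : Set X) := Set.add_mem_add hqW hqS
    simpa using this
  have hspan : Submodule.span ℝ (x '' Set.Iio (Cardinal.aleph 1).ord) ≤ W ⊔ S := by
    rw [Submodule.span_le]
    rintro _ ⟨α, hα, rfl⟩
    rcases lt_or_ge α βs with h | h
    · exact Submodule.mem_sup_left (SetLike.mem_coe.1 (subset_closedSpan _ ⟨α, h, rfl⟩))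
    · exact Submodule.mem_sup_right (SetLike.mem_coe.1 (subset_closedSpan _ ⟨α, ⟨h, hα⟩, rfl⟩))
  have htop : W ⊔ S = ⊤ := by
    have h1 : (W ⊔ S).topologicalClosure = W ⊔ S :=
      IsClosed.submodule_topologicalClosure_eq (by rw [Submodule.coe_sup]; exact hsum_closed)
    rw [← h1, eq_top_iff, ← hgen]
    exact Submodule.topologicalClosure_mono hspan
  have hcompl : IsCompl W S := ⟨hdisj, codisjoint_iff.2 htop⟩
  -- the projection
  set prj : X →ₗ[ℝ] W := Submodule.linearProjOfIsCompl W S hcompl with hprj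
  set Plin : X →ₗ[ℝ] X := W.subtype.comp prj with hPlin
  have hPmem : ∀ v : X, Plin v ∈ W := fun v => (prj v).2
  have hid : ∀ u ∈ W, Plin u = u := by
    intro u hu
    show ((prj u : W) : X) = u
    rw [show prj u = ⟨u, hu⟩ from Submodule.linearProjOfIsCompl_apply_left hcompl ⟨u, hu⟩]
  have hPsub : ∀ v : X, v - Plin v ∈ S := by
    intro v
    rw [← Submodule.linearProjOfIsCompl_apply_eq_zero_iff (h := hcompl)]
    have h1 : prj (Plin v) = prj v := by
      show prj ((prj v : W) : X) = prj v
      exact Submodule.linearProjOfIsCompl_apply_left hcompl (prj v)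
    rw [map_sub]
    show prj v - prj (Plin v) = 0
    rw [h1, _root_.sub_self]
  have hbound : ∀ v : X, ‖Plin v‖ ≤ M * ‖v‖ := by
    intro v
    have h1 := hkey2 (Plin v) (hPmem v) (v - Plin v) (hPsub v)
    have h2 : Plin v + (v - Plin v) = v := by abel
    rw [h2] at h1
    exact h1
  set P : X →L[ℝ] X := Plin.mkContinuous M hbound with hP
  have hPapp : ∀ v : X, P v = Plin v := fun v => rfl
  refine ⟨Set.Iio βs, Set.Iio_subset_Iio hβslt.le, P, ?_, ?_, ?_, ?_, ?_⟩
  · intro v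
    show Plin (Plin v) = Plin v
    exact hid (Plin v) (hPmem v)
  · exact LinearMap.mkContinuous_norm_le _ hM0 _
  · apply le_antisymm
    · rintro _ ⟨v, rfl⟩
      exact hPmem v
    · intro v hv
      exact ⟨v, hid v hv⟩
  · exact isSeparable_closedSpan_of_countable ((countable_Iio_of_lt hβslt).image x)
  · exact hβ₀Y.trans (closedSpan_mono (Set.image_mono (Set.Iio_subset_Iio hβ₀le)))

end Stmt10Aux
theorem stmt10 {X : Type u} [NormedAddCommGroup X] [NormedSpace ℝ X] [CompleteSpace X]
    (hB : CondB X)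
    (x : Ordinal.{u} → X)
    (hsd : IsStronglyDispersed x (Cardinal.aleph 1).ord)
    (hgen : closedSpan (x '' Set.Iio (Cardinal.aleph 1).ord) = ⊤) :
    (∀ Y : Submodule ℝ X, TopologicalSpace.IsSeparable (Y : Set X) →
      ∃ Γ ⊆ Set.Iio (Cardinal.aleph 1).ord, ∃ P : X →L[ℝ] X,
        (∀ v, P (P v) = P v) ∧
        LinearMap.range (P : X →ₗ[ℝ] X) = closedSpan (x '' Γ) ∧
        TopologicalSpace.IsSeparable ((closedSpan (x '' Γ) : Submodule ℝ X) : Set X) ∧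
        Y ≤ closedSpan (x '' Γ)) ∧
    (Cond1B X →
      ∀ Y : Submodule ℝ X, TopologicalSpace.IsSeparable (Y : Set X) →
        ∃ Γ ⊆ Set.Iio (Cardinal.aleph 1).ord, ∃ P : X →L[ℝ] X,
          (∀ v, P (P v) = P v) ∧ ‖P‖ ≤ 1 ∧
          LinearMap.range (P : X →ₗ[ℝ] X) = closedSpan (x '' Γ) ∧
          TopologicalSpace.IsSeparable ((closedSpan (x '' Γ) : Submodule ℝ X) : Set X) ∧
          Y ≤ closedSpan (x '' Γ)) := by
  have hZc : ∀ α < (Cardinal.aleph 1).ord,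
      IsClosed ((Stmt10Aux.tailZ x α : Submodule ℝ X) : Set X) :=
    fun α _ => Stmt10Aux.tailZ_isClosed x α
  have hZa : ∀ α β, α ≤ β → β < (Cardinal.aleph 1).ord →
      Stmt10Aux.tailZ x β ≤ Stmt10Aux.tailZ x α :=
    fun α β h _ => Stmt10Aux.tailZ_antitone x h
  have hZi := Stmt10Aux.tailZ_iInter x hsd
  constructor
  · intro Y hY
    have hbdd := hB (Cardinal.aleph 1) Cardinal.isRegular_aleph_one Cardinal.aleph0_lt_aleph_one
      (Stmt10Aux.tailZ x) hZc hZa hZi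
    obtain ⟨M, hM⟩ := hbdd.subset_closedBall 0
    obtain ⟨Γ, hΓ, P, h1, _, h3, h4, h5⟩ := Stmt10Aux.main_construction x hsd hgen M hM Y hY
    exact ⟨Γ, hΓ, P, h1, h3, h4, h5⟩
  · intro h1B Y hY
    have hM := h1B (Cardinal.aleph 1) Cardinal.isRegular_aleph_one Cardinal.aleph0_lt_aleph_one
      (Stmt10Aux.tailZ x) hZc hZa hZi
    obtain ⟨Γ, hΓ, P, h1, h2, h3, h4, h5⟩ := Stmt10Aux.main_construction x hsd hgen 1 hM Y hY
    exact ⟨Γ, hΓ, P, h1, h2, h3, h4, h5⟩
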